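/- arXiv:2302.01373 — 2 statements merged into one kernel-verified Lean document; each statement's English description precedes it below -/
import Mathlib

section
/- Let T be a rooted tree, b > 1, with heavy edges defined as edges whose endpoints have equal layer (layer(v) = k iff n/b^{k+1} < s(v) ≤ n/b^k, n = |T|). Let H be a connected component ('heavy tree') of T after removing light edges, with root r. Then H has at most b leaves (leaves of H, i.e., nodes of H with no child in H). -/
/-- A heavy tree H (maximal connected subtree of heavy edges, i.e., edges between
nodes of equal layer) with root r has at most b leaves. -/
theorem stmt5 {V : Type*} [Fintype V]
    (root : V) (parent : V → V)
    (hroot : parent root = root)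
    (hacyc : ∀ v : V, ∃ n : ℕ, parent^[n] v = root)
    (n : ℕ) (hn : n = Fintype.card V)
    (s : V → ℕ)
    (hs : ∀ u : V, s u = Set.ncard {w : V | ∃ k : ℕ, parent^[k] w = u})
    (b : ℝ) (hb : 1 < b)
    (L : V → ℕ)
    (hL : ∀ v : V, (n : ℝ) / b ^ (L v + 1) < (s v : ℝ) ∧ (s v : ℝ) ≤ (n : ℝ) / b ^ L v)
    (r : V) (H : Set V)
    (hH : ∀ v : V, v ∈ H ↔ ∃ k : ℕ, parent^[k] v = r ∧ ∀ j ≤ k, L (parent^[j] v) = L r) :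
    (Set.ncard {v : V | v ∈ H ∧ ∀ w : V, w ≠ v → parent w = v → w ∉ H} : ℝ) ≤ b := by
  classical
  have hb0 : (0:ℝ) < b := lt_trans one_pos hb
  have hrootfix : ∀ i, parent^[i] root = root := fun i => Function.iterate_fixed hroot i
  -- no nontrivial cycles except fixed root
  have hA : ∀ (v : V) (t : ℕ), 0 < t → parent^[t] v = v → v = root := by
    intro v t ht hcyc
    obtain ⟨N, hN⟩ := hacyc v
    have hmul : ∀ M : ℕ, parent^[t * M] v = v := by
      intro M
      induction M with
      | zero => simp
      | succ M ih => rw [Nat.mul_succ, Function.iterate_add_apply, hcyc, ih]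
    have h1 : parent^[t * (N+1)] v = v := hmul (N+1)
    have hle : N + 1 ≤ t * (N+1) := Nat.le_mul_of_pos_left _ ht
    have h2 : t * (N+1) = (t * (N+1) - N) + N := by omega
    rw [h2, Function.iterate_add_apply, hN, hrootfix] at h1
    exact h1.symm
  -- ancestors along witness path are in H
  have hB : ∀ (v : V) (k : ℕ), parent^[k] v = r → (∀ j ≤ k, L (parent^[j] v) = L r) →
      ∀ i ≤ k, parent^[i] v ∈ H := by
    intro v k hk hl i hi
    rw [hH]
    refine ⟨k - i, ?_, ?_⟩
    · rw [← Function.iterate_add_apply]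
      have : k - i + i = k := by omega
      rw [this, hk]
    · intro j hj
      rw [← Function.iterate_add_apply]
      exact hl (j + i) (by omega)
  set Lv : Set V := {v : V | v ∈ H ∧ ∀ w : V, w ≠ v → parent w = v → w ∉ H} with hLv
  -- a node of H having a leaf as a (weak) ancestor must equal that leaf
  have hD : ∀ (l1 l2 : V), l1 ∈ H → l2 ∈ Lv → ∀ j : ℕ, parent^[j] l1 = l2 → l1 = l2 := by
    intro l1 l2 h1 h2 j hj
    have hex : ∃ j : ℕ, parent^[j] l1 = l2 := ⟨j, hj⟩
    set j0 := Nat.find hex with hj0def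
    have hj0 : parent^[j0] l1 = l2 := Nat.find_spec hex
    rcases Nat.eq_zero_or_pos j0 with h0 | hpos
    · rw [h0] at hj0; exact hj0
    · exfalso
      set c := parent^[j0 - 1] l1 with hc
      have hpc : parent c = l2 := by
        have hstep := Function.iterate_succ_apply' parent (j0 - 1) l1
        have he : (j0 - 1).succ = j0 := by omega
        rw [he] at hstep
        rw [hc, ← hstep, hj0]
      have hcne : c ≠ l2 := Nat.find_min hex (by omega)
      obtain ⟨k, hk, hl⟩ := (hH l1).1 h1
      rcases le_or_gt (j0 - 1) k with hle | hgt
      · exact h2.2 c hcne hpc (hB l1 k hk hl (j0 - 1) hle)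
      · -- c is a strict ancestor of r; derive r = root
        have hcr : c = parent^[j0 - 1 - k] r := by
          rw [hc, ← hk, ← Function.iterate_add_apply]
          congr 1
          omega
        obtain ⟨m, hm, _⟩ := (hH l2).1 h2.1
        have hl2r : l2 = parent^[j0 - k] r := by
          rw [← hj0, ← hk, ← Function.iterate_add_apply]
          congr 1
          omega
        have hcyc : parent^[m + (j0 - k)] r = r := by
          rw [Function.iterate_add_apply, ← hl2r, hm]
        have hr : r = root := hA r (m + (j0 - k)) (by omega) hcyc
        apply hcne
        rw [hcr, hl2r, hr, hrootfix, hrootfix]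
  -- subtrees as finsets
  set subF : V → Finset V := fun v => Finset.univ.filter (fun w => ∃ k : ℕ, parent^[k] w = v)
    with hsubF
  have hs' : ∀ v, s v = (subF v).card := by
    intro v
    rw [hs]
    rw [Set.ncard_eq_toFinset_card']
    congr 1
    ext w
    simp [hsubF]
  -- leaves as a finset
  set LF : Finset V := Finset.univ.filter (fun v => v ∈ Lv) with hLF
  have hncard : Lv.ncard = LF.card := by
    rw [Set.ncard_eq_toFinset_card']
    congr 1
    ext w
    simp [hLF]
  -- disjointness of leaf subtrees
  have hdisj : ∀ l1 ∈ LF, ∀ l2 ∈ LF, l1 ≠ l2 → Disjoint (subF l1) (subF l2) := by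
    intro l1 h1 l2 h2 hne
    simp only [hLF, Finset.mem_filter] at h1 h2
    rw [Finset.disjoint_left]
    intro w hw1 hw2
    simp only [hsubF, Finset.mem_filter] at hw1 hw2
    obtain ⟨a, ha⟩ := hw1.2
    obtain ⟨cc, hcc⟩ := hw2.2
    rcases le_total a cc with h | h
    · have : parent^[cc - a] l1 = l2 := by
        rw [← ha, ← Function.iterate_add_apply]
        have : cc - a + a = cc := by omega
        rw [this, hcc]
      exact hne (hD l1 l2 h1.2.1 h2.2 _ this)
    · have : parent^[a - cc] l2 = l1 := by
        rw [← hcc, ← Function.iterate_add_apply]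
        have : a - cc + cc = a := by omega
        rw [this, ha]
      exact hne (hD l2 l1 h2.2.1 h1.2 _ this).symm
  -- each leaf subtree is inside the subtree of r
  have hsub : ∀ l ∈ LF, subF l ⊆ subF r := by
    intro l hl
    simp only [hLF, Finset.mem_filter] at hl
    obtain ⟨k, hk, _⟩ := (hH l).1 hl.2.1
    intro w hw
    simp only [hsubF, Finset.mem_filter] at hw ⊢
    obtain ⟨a, ha⟩ := hw.2
    exact ⟨Finset.mem_univ _, k + a, by rw [Function.iterate_add_apply, ha, hk]⟩
  -- sum of subtree sizes bounded by s r
  have hsum : ∑ l ∈ LF, s l ≤ s r := by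
    have h1 : ∑ l ∈ LF, (subF l).card = (LF.biUnion subF).card :=
      (Finset.card_biUnion hdisj).symm
    have h2 : LF.biUnion subF ⊆ subF r := by
      intro w hw
      rw [Finset.mem_biUnion] at hw
      obtain ⟨l, hl, hwl⟩ := hw
      exact hsub l hl hwl
    calc ∑ l ∈ LF, s l = ∑ l ∈ LF, (subF l).card := by
          exact Finset.sum_congr rfl (fun l _ => hs' l)
      _ = (LF.biUnion subF).card := h1
      _ ≤ (subF r).card := Finset.card_le_card h2
      _ = s r := (hs' r).symm
  -- we are done if no leaves
  rcases Finset.eq_empty_or_nonempty LF with hemp | hne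
  · rw [hncard, hemp]
    simp
    linarith
  · -- real arithmetic
    have hKey : ∀ l ∈ LF, (n : ℝ) / b ^ (L r + 1) < (s l : ℝ) := by
      intro l hl
      simp only [hLF, Finset.mem_filter] at hl
      obtain ⟨k, hk, hlk⟩ := (hH l).1 hl.2.1
      have hEq : L l = L r := by simpa using hlk 0 (Nat.zero_le k)
      have h := (hL l).1
      rwa [hEq] at h
    have h1 : ∑ l ∈ LF, ((n:ℝ) / b ^ (L r + 1)) < ∑ l ∈ LF, (s l : ℝ) :=
      Finset.sum_lt_sum_of_nonempty hne hKey
    have h2 : (∑ l ∈ LF, (s l : ℝ)) ≤ (s r : ℝ) := by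
      have h2' : ((∑ l ∈ LF, s l : ℕ) : ℝ) ≤ ((s r : ℕ) : ℝ) := by exact_mod_cast hsum
      rwa [Nat.cast_sum] at h2'
    rw [Finset.sum_const, nsmul_eq_mul] at h1
    have hcard : (LF.card : ℝ) * ((n:ℝ) / b ^ (L r + 1)) < (s r : ℝ) := by linarith
    have hsr : (s r : ℝ) ≤ (n:ℝ) / b ^ L r := (hL r).2
    have hnpos : (0:ℝ) < n := by
      have h0 : 0 < Fintype.card V := Fintype.card_pos_iff.mpr ⟨r⟩
      rw [hn]; exact_mod_cast h0
    have hpos : (0:ℝ) < (n:ℝ) / b ^ (L r + 1) := by positivity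
    have hrel : (n:ℝ) / b ^ L r = ((n:ℝ) / b ^ (L r + 1)) * b := by
      rw [pow_succ]
      field_simp
    rw [hncard]
    nlinarith [hcard, hsr, hrel, hpos]
end

section
/- Gadget degree-reduction lemma (path-length bound): let C be a rooted tree with N nodes in which every edge (v,z) from parent v to child z of a designated 'interval' type satisfies s(v) ≥ s(z)·log N (where s is subtree size), and in which any root-to-leaf path contains at most d edges not of interval type. Then the depth of C is at most d + O(log N / log log N). -/
/-- Gadget degree-reduction path-length bound: in a rooted tree with N nodes in which
every interval edge (v, z) satisfies s(v) ≥ s(z)·log N and every root-to-leaf path has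
at most d non-interval edges, the depth is at most d + log N / log log N + O(1). -/
theorem stmt15 : ∃ C : ℝ, ∀ (V : Type) [Fintype V],
    ∀ (root : V) (parent : V → V),
    parent root = root →
    (∀ v : V, ∃ n : ℕ, parent^[n] v = root) →
    ∀ N : ℕ, N = Fintype.card V → 4 ≤ N →
    ∀ s : V → ℕ, (∀ u : V, s u = Set.ncard {w : V | ∃ k : ℕ, parent^[k] w = u}) →
    ∀ IE : V → Prop,
    (∀ z : V, z ≠ root → IE z → (s z : ℝ) * Real.log N ≤ (s (parent z) : ℝ)) →
    ∀ d : ℕ,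
    (∀ (v : V) (n : ℕ), (∀ j < n, parent^[j] v ≠ root) →
      Set.ncard {j : ℕ | j < n ∧ ¬IE (parent^[j] v)} ≤ d) →
    ∀ v : V, ∃ n : ℕ, parent^[n] v = root ∧
      (n : ℝ) ≤ (d : ℝ) + Real.log N / Real.log (Real.log N) + C := by
  classical
  refine ⟨0, ?_⟩
  intro V _ root parent hroot hreach N hN hN4 s hs IE hIE d hd v
  have hex : ∃ n, parent^[n] v = root := hreach v
  set n := Nat.find hex with hn_def
  have hn : parent^[n] v = root := Nat.find_spec hex
  have hmin : ∀ j < n, parent^[j] v ≠ root := fun j hj => Nat.find_min hex hj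
  -- basic facts about s
  have hone : ∀ u : V, 1 ≤ s u := by
    intro u
    rw [hs u]
    have hfin : ({w : V | ∃ k : ℕ, parent^[k] w = u}).Finite := Set.toFinite _
    have hne : ({w : V | ∃ k : ℕ, parent^[k] w = u}).Nonempty := ⟨u, 0, rfl⟩
    exact (Set.ncard_pos hfin).mpr hne
  have hmono : ∀ u : V, s u ≤ s (parent u) := by
    intro u
    rw [hs u, hs (parent u)]
    refine Set.ncard_le_ncard ?_ (Set.toFinite _)
    rintro w ⟨k, hk⟩
    exact ⟨k + 1, by rw [Function.iterate_succ_apply', hk]⟩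
  have hsrootN : s root ≤ N := by
    rw [hs root, hN]
    calc Set.ncard {w : V | ∃ k : ℕ, parent^[k] w = root}
        ≤ Set.ncard (Set.univ : Set V) :=
          Set.ncard_le_ncard (Set.subset_univ _) (Set.toFinite _)
      _ = Fintype.card V := by rw [Set.ncard_univ, Nat.card_eq_fintype_card]
  -- log N > 1
  have hN4R : (4:ℝ) ≤ (N:ℝ) := by exact_mod_cast hN4
  have hL : (1:ℝ) < Real.log N := by
    have h4 : (1:ℝ) < Real.log 4 := by
      rw [show (4:ℝ) = 2^2 by norm_num, Real.log_pow]
      push_cast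
      nlinarith [Real.log_two_gt_d9]
    exact lt_of_lt_of_le h4 (Real.log_le_log (by norm_num) hN4R)
  have hLpos : (0:ℝ) < Real.log N := lt_trans one_pos hL
  -- count of interval edges up to m
  set L := Real.log N with hLdef
  have key : ∀ m, m ≤ n →
      L ^ (((Finset.range m).filter (fun j => IE (parent^[j] v))).card)
        ≤ (s (parent^[m] v) : ℝ) := by
    intro m
    induction m with
    | zero =>
      intro _
      simp only [Finset.range_zero, Finset.filter_empty, Finset.card_empty, pow_zero]
      exact_mod_cast hone v
    | succ m ih =>
      intro hm
      have hmn : m < n := Nat.lt_of_succ_le hm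
      have ihm := ih (le_of_lt hmn)
      have hnr : parent^[m] v ≠ root := hmin m hmn
      have hiter : parent^[m+1] v = parent (parent^[m] v) :=
        Function.iterate_succ_apply' parent m v
      have hins : Finset.range (m+1) = insert m (Finset.range m) := Finset.range_add_one
      by_cases hIEm : IE (parent^[m] v)
      · have hcard : ((Finset.range (m+1)).filter (fun j => IE (parent^[j] v))).card
            = ((Finset.range m).filter (fun j => IE (parent^[j] v))).card + 1 := by
          rw [hins, Finset.filter_insert, if_pos hIEm,
            Finset.card_insert_of_notMem (by simp)]
        rw [hcard, pow_succ, hiter]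
        calc L ^ ((Finset.range m).filter (fun j => IE (parent^[j] v))).card * L
            ≤ (s (parent^[m] v) : ℝ) * L := by
              apply mul_le_mul_of_nonneg_right ihm (le_of_lt hLpos)
          _ ≤ (s (parent (parent^[m] v)) : ℝ) := hIE _ hnr hIEm
      · have hcard : ((Finset.range (m+1)).filter (fun j => IE (parent^[j] v))).card
            = ((Finset.range m).filter (fun j => IE (parent^[j] v))).card := by
          rw [hins, Finset.filter_insert, if_neg hIEm]
        rw [hcard, hiter]
        exact le_trans ihm (by exact_mod_cast hmono (parent^[m] v))
  -- bound on number of interval edges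
  set k := ((Finset.range n).filter (fun j => IE (parent^[j] v))).card with hk_def
  have hLk : L ^ k ≤ (N:ℝ) := by
    calc L ^ k ≤ (s (parent^[n] v) : ℝ) := key n le_rfl
      _ = (s root : ℝ) := by rw [hn]
      _ ≤ (N:ℝ) := by exact_mod_cast hsrootN
  have hklog : (k:ℝ) * Real.log L ≤ Real.log N := by
    have := Real.log_le_log (pow_pos hLpos k) hLk
    rwa [Real.log_pow] at this
  have hlogLpos : 0 < Real.log L := Real.log_pos hL
  have hkbound : (k:ℝ) ≤ Real.log N / Real.log L :=
    (le_div_iff₀ hlogLpos).mpr hklog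
  -- bound on non-interval edges
  have hdbound : ((Finset.range n).filter (fun j => ¬IE (parent^[j] v))).card ≤ d := by
    have hset : {j : ℕ | j < n ∧ ¬IE (parent^[j] v)}
        = ↑((Finset.range n).filter (fun j => ¬IE (parent^[j] v))) := by
      ext j; simp [Finset.mem_filter, Finset.mem_range]
    have := hd v n hmin
    rwa [hset, Set.ncard_coe_finset] at this
  have hsplit : k + ((Finset.range n).filter (fun j => ¬IE (parent^[j] v))).card = n := by
    rw [hk_def]
    rw [Finset.card_filter_add_card_filter_not, Finset.card_range]
  have hnk : n ≤ d + k := by omega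
  refine ⟨n, hn, ?_⟩
  have : (n:ℝ) ≤ (d:ℝ) + (k:ℝ) := by exact_mod_cast hnk
  calc (n:ℝ) ≤ (d:ℝ) + (k:ℝ) := this
    _ ≤ (d:ℝ) + Real.log N / Real.log (Real.log N) + 0 := by
        rw [add_zero]; exact add_le_add le_rfl hkbound
end
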